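/- Let F_r be an r-region forest plan of G with r > 1, set ξ_r = ξ(F_r), and assume W(ξ_r) > 0. Then Σ_{F_{r-1} ∈ A₁(F_r)} γ̃(F_{r-1}) · M(F_r | F_{r-1}) = γ(ξ_r) · Σ_{{T_k, T_{k'}} adjacent in F_r} (∏_{G_n} τ(G_n))^{-1} · (W(ξ̃_{r-1})/W(ξ_r)) · τ(G[V(T_k) ∪ V(T_{k'})])^{ρ−1} / (τ(G[V(T_k)])^ρ · τ(G[V(T_{k'})])^ρ) · φ(G[V(T_k) ∪ V(T_{k'})] | ξ̃_{r-1}) · EffB(T_k, T_{k'}), where for each adjacent pair the plan ξ̃_{r-1} is obtained from ξ_r by replacing the blocks V(T_k) and V(T_{k'}) with V(T_k) ∪ V(T_{k'}), and the product ∏_{G_n} τ(G_n) ranges over the regions G_n of ξ_r other than G[V(T_k)] and G[V(T_{k'})]. -/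

import Mathlib

open SimpleGraph

namespace Redist

variable {V : Type*} [Fintype V] [DecidableEq V]

/-- The subgraph of `G` induced by the vertex set `s` (the graph `G[s]`). -/
abbrev ind (G : SimpleGraph V) (s : Set V) : G.Subgraph :=
  (⊤ : G.Subgraph).induce s

/-- `T` is a spanning tree of the subgraph `H` of `G`. -/
def IsSpanningTreeOf (G : SimpleGraph V) (T H : G.Subgraph) : Prop :=
  T ≤ H ∧ T.verts = H.verts ∧ T.coe.IsTree

/-- `τ H`: the number of spanning trees of the subgraph `H`. -/
noncomputable def tau (G : SimpleGraph V) (H : G.Subgraph) : ℕ :=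
  {T : G.Subgraph | IsSpanningTreeOf G T H}.ncard

/-- `C(s, t)`: the set of edges of `G` with one endpoint in `s` and the other in `t`. -/
def crossEdges (G : SimpleGraph V) (s t : Set V) : Set (Sym2 V) :=
  {e | e ∈ G.edgeSet ∧ ∃ u v : V, e = s(u, v) ∧ u ∈ s ∧ v ∈ t}

/-- The subgraph obtained from `H` by adding the edges in `E'` (that are edges of `G`). -/
def withEdges (G : SimpleGraph V) (H : G.Subgraph) (E' : Set (Sym2 V)) : G.Subgraph where
  verts := H.verts ∪ {v | ∃ e ∈ E' ∩ G.edgeSet, v ∈ e}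
  Adj u v := H.Adj u v ∨ (s(u, v) ∈ E' ∧ G.Adj u v)
  adj_sub := by
    rintro u v (h | ⟨-, h⟩)
    · exact H.adj_sub h
    · exact h
  edge_vert := by
    rintro u v (h | ⟨h, hG⟩)
    · exact Or.inl (H.edge_vert h)
    · exact Or.inr ⟨s(u, v), ⟨h, hG⟩, Sym2.mem_mk_left u v⟩
  symm := by
    constructor
    rintro u v (h | ⟨h, hG⟩)
    · exact Or.inl (H.symm.symm _ _ h)
    · exact Or.inr ⟨by rwa [Sym2.eq_swap], hG.symm⟩

/-- A plan with `r` regions: a partition of the vertex set into `r` nonempty blocks,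
each inducing a connected subgraph. -/
structure Plan (G : SimpleGraph V) (r : ℕ) where
  blocks : Set (Set V)
  ncard_blocks : blocks.ncard = r
  blocks_nonempty : ∀ B ∈ blocks, B.Nonempty
  blocks_disjoint : ∀ B ∈ blocks, ∀ B' ∈ blocks, B ≠ B' → Disjoint B B'
  blocks_cover : ∀ v : V, ∃ B ∈ blocks, v ∈ B
  blocks_connected : ∀ B ∈ blocks, (ind G B).Connected

/-- `ξp` is a 1-region ancestor of `ξr`: exactly one region of `ξp` is not a region of `ξr`. -/
def IsAncestor (G : SimpleGraph V) {r : ℕ} (ξp : Plan G (r - 1)) (ξr : Plan G r) : Prop :=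
  (ξp.blocks \ ξr.blocks).ncard = 1

/-- An `r`-region forest plan: `r` vertex-disjoint trees covering all of `V`. -/
structure ForestPlan (G : SimpleGraph V) (r : ℕ) where
  trees : Set G.Subgraph
  ncard_trees : trees.ncard = r
  isTree : ∀ T ∈ trees, T.coe.IsTree
  trees_disjoint : ∀ T ∈ trees, ∀ T' ∈ trees, T ≠ T' → Disjoint T.verts T'.verts
  trees_cover : ∀ v : V, ∃ T ∈ trees, v ∈ T.verts

/-- The induced plan of a forest plan (as a family of blocks). -/
def forestBlocks (G : SimpleGraph V) {r : ℕ} (F : ForestPlan G r) : Set (Set V) :=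
  Subgraph.verts '' F.trees

/-- `Fp` is a 1-region tree ancestor of `Fr`. -/
def ForestAncestor (G : SimpleGraph V) {r : ℕ} (Fp : ForestPlan G (r - 1))
    (Fr : ForestPlan G r) : Prop :=
  (Fp.trees \ Fr.trees).ncard = 1

variable {A : Type*}

/-- The set of administrative units meeting the vertex set `s`. -/
def unitSet (η : V → A) (s : Set V) : Set A := {a | (s ∩ η ⁻¹' {a}).Nonempty}

/-- A block is hierarchically connected: its intersection with each administrative unit has
at most one connected component. -/
def HierConnectedBlock (G : SimpleGraph V) (η : V → A) (B : Set V) : Prop :=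
  ∀ a : A, (ind G (B ∩ η ⁻¹' {a})).coe.Preconnected

/-- `T` is an `η`-hierarchical tree on the region induced by `B`. -/
def IsHierTree (G : SimpleGraph V) (η : V → A) (T : G.Subgraph) (B : Set V) : Prop :=
  IsSpanningTreeOf G T (ind G B) ∧
    ∀ a : A, (B ∩ η ⁻¹' {a}).Nonempty →
      IsSpanningTreeOf G (T.induce (B ∩ η ⁻¹' {a})) (ind G (B ∩ η ⁻¹' {a}))

/-- Two blocks are administratively adjacent. -/
def AdminAdj (G : SimpleGraph V) (η : V → A) (B B' : Set V) : Prop :=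
  ∃ a : A, ∃ u v : V, G.Adj u v ∧ u ∈ B ∩ η ⁻¹' {a} ∧ v ∈ B' ∩ η ⁻¹' {a}

/-- `S` is (the set of regions of) a connected component of the administrative adjacency
graph of the plan with blocks `blocks`. -/
def IsAdminComponent (G : SimpleGraph V) (η : V → A) (blocks S : Set (Set V)) : Prop :=
  S ⊆ blocks ∧ S.Nonempty ∧
    (∀ B ∈ S, ∀ B' ∈ S,
      Relation.ReflTransGen (fun X Y => X ∈ S ∧ Y ∈ S ∧ AdminAdj G η X Y) B B') ∧
    ∀ B ∈ S, ∀ B' ∈ blocks, B' ∉ S → ¬AdminAdj G η B B'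

/-- The number of connected components of the subgraph induced by `s`. -/
noncomputable def numComponents (G : SimpleGraph V) (s : Set V) : ℕ :=
  Nat.card ((ind G s).coe.ConnectedComponent)

/-- The number of administrative splits of a family `S` of blocks. -/
noncomputable def splits [Fintype A] (G : SimpleGraph V) (η : V → A) (S : Set (Set V)) : ℕ :=
  (∑ᶠ a : A, ∑ᶠ B ∈ S, numComponents G (B ∩ η ⁻¹' {a})) -
    {a : A | ∃ B ∈ S, (B ∩ η ⁻¹' {a}).Nonempty}.ncard

/-- `T` is a hierarchical plan tree for the plan with blocks `blocks`. -/
def IsHierPlanTree (G : SimpleGraph V) (η : V → A) (T : G.Subgraph)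
    (blocks : Set (Set V)) : Prop :=
  IsHierTree G η T Set.univ ∧ ∀ B ∈ blocks, IsHierTree G η (T.induce B) B

/-- The plan with blocks `blocks` is hierarchical. -/
def IsHierPlanBlocks (G : SimpleGraph V) (η : V → A) (blocks : Set (Set V)) : Prop :=
  ∃ T : G.Subgraph, IsHierPlanTree G η T blocks

/-- The effective region tree boundary length between two vertex-disjoint trees. -/
noncomputable def EffB (G : SimpleGraph V) (p : G.Subgraph → Sym2 V → ℝ)
    (Tk Tk' : G.Subgraph) : ℝ :=
  ∑ᶠ e ∈ crossEdges G Tk.verts Tk'.verts, p (withEdges G (Tk ⊔ Tk') {e}) e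


private lemma reachable_delete' {W : Type*} {G : SimpleGraph W} {x y : W}
    (h : (G \ fromEdgeSet {s(x, y)}).Reachable x y) {a b : W} (p : G.Walk a b) :
    (G \ fromEdgeSet {s(x, y)}).Reachable a b := by
  induction p with
  | nil => exact Reachable.refl _
  | @cons u v w hadj p ih =>
    by_cases hc : s(u, v) = s(x, y)
    · rcases Sym2.eq_iff.mp hc with ⟨rfl, rfl⟩ | ⟨rfl, rfl⟩
      · exact h.trans ih
      · exact h.symm.trans ih
    · have hadj' : (G \ fromEdgeSet {s(x, y)}).Adj u v := by
        rw [sdiff_adj]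
        exact ⟨hadj, by simp [fromEdgeSet_adj, hc]⟩
      exact hadj'.reachable.trans ih

private lemma exists_spanning_tree_aux {W : Type*} [Finite W] :
    ∀ (n : ℕ) (G : SimpleGraph W), G.edgeSet.ncard ≤ n → G.Connected →
      ∃ T : SimpleGraph W, T ≤ G ∧ T.IsTree := by
  intro n
  induction n with
  | zero =>
    intro G hn hG
    have hac : G.IsAcyclic := by
      intro v c hc
      have hne : c.edges ≠ [] := by
        intro h
        have := hc.three_le_length
        rw [← Walk.length_edges, h] at this
        simp at this
      obtain ⟨e, he⟩ := List.exists_mem_of_ne_nil _ hne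
      have heG : e ∈ G.edgeSet := Walk.edges_subset_edgeSet c he
      have hempty : G.edgeSet = ∅ :=
        Set.ncard_eq_zero (Set.toFinite _) |>.mp (Nat.le_zero.mp hn)
      simp [hempty] at heG
    exact ⟨G, le_rfl, ⟨hG, hac⟩⟩
  | succ n ih =>
    intro G hn hG
    by_cases hac : G.IsAcyclic
    · exact ⟨G, le_rfl, ⟨hG, hac⟩⟩
    rw [SimpleGraph.IsAcyclic] at hac
    push_neg at hac
    obtain ⟨v, c, hc⟩ := hac
    have hne : c.edges ≠ [] := by
      intro h
      have := hc.three_le_length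
      rw [← Walk.length_edges, h] at this
      simp at this
    obtain ⟨e, he⟩ := List.exists_mem_of_ne_nil _ hne
    induction e with
    | h x y =>
    have hxy : (G \ fromEdgeSet {s(x, y)}).Reachable x y :=
      (adj_and_reachable_delete_edges_iff_exists_cycle.mpr ⟨v, c, hc, he⟩).2
    set G' := G \ fromEdgeSet {s(x, y)} with hG'
    have hle : G' ≤ G := sdiff_le
    haveI := hG.nonempty
    have hconn : G'.Connected := by
      refine Connected.mk ?_
      intro a b
      exact reachable_delete' hxy ((hG.preconnected a b).some)
    have hcard : G'.edgeSet.ncard ≤ n := by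
      have hes : G'.edgeSet = G.edgeSet \ {s(x, y)} := by
        rw [hG', edgeSet_sdiff, edgeSet_fromEdgeSet, edgeSet_sdiff_sdiff_isDiag]
      have hmem : s(x, y) ∈ G.edgeSet := Walk.edges_subset_edgeSet c he
      have := Set.ncard_diff_singleton_lt_of_mem hmem (Set.toFinite _)
      rw [← hes] at this
      omega
    obtain ⟨T, hT, hTtree⟩ := ih G' hcard hconn
    exact ⟨T, hT.trans hle, hTtree⟩

/-- Turn a simple graph on the vertex set of `H` that is below `H.coe` into a subgraph. -/
private def ofCoe {G : SimpleGraph V} (H : G.Subgraph) (T' : SimpleGraph H.verts)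
    (hle : T' ≤ H.coe) : G.Subgraph where
  verts := H.verts
  Adj a b := ∃ (ha : a ∈ H.verts) (hb : b ∈ H.verts), T'.Adj ⟨a, ha⟩ ⟨b, hb⟩
  adj_sub := by rintro a b ⟨ha, hb, h⟩; exact H.adj_sub (hle h)
  edge_vert := by rintro a b ⟨ha, hb, h⟩; exact ha
  symm := by constructor; rintro a b ⟨ha, hb, h⟩; exact ⟨hb, ha, h.symm⟩

private lemma coe_ofCoe {G : SimpleGraph V} (H : G.Subgraph) (T' : SimpleGraph H.verts)
    (hle : T' ≤ H.coe) : (ofCoe H T' hle).coe = T' := by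
  ext ⟨a, ha⟩ ⟨b, hb⟩
  constructor
  · rintro ⟨_, _, h⟩
    exact h
  · intro h
    exact ⟨ha, hb, h⟩

/-- Every connected subgraph has a spanning tree. -/
lemma exists_isSpanningTreeOf (G : SimpleGraph V) (H : G.Subgraph)
    (hH : H.coe.Connected) : ∃ T : G.Subgraph, IsSpanningTreeOf G T H := by
  obtain ⟨T', hT'le, hT'tree⟩ :=
    exists_spanning_tree_aux (H.coe.edgeSet.ncard) H.coe le_rfl hH
  refine ⟨ofCoe H T' hT'le, ⟨?_, ?_⟩, rfl, ?_⟩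
  · exact fun a ha => ha
  · rintro a b ⟨ha, hb, h⟩
    exact hT'le h
  · rw [coe_ofCoe]
    exact hT'tree


lemma subgraph_le_ind (G : SimpleGraph V) (H : G.Subgraph) : H ≤ ind G H.verts := by
  constructor
  · exact fun a ha => ha
  · intro a b h
    exact ⟨H.edge_vert h, H.edge_vert h.symm, H.adj_sub h⟩

lemma tree_spans (G : SimpleGraph V) (T : G.Subgraph) (h : T.coe.IsTree) :
    IsSpanningTreeOf G T (ind G T.verts) :=
  ⟨subgraph_le_ind G T, rfl, h⟩

lemma reach_in_sup {G : SimpleGraph V} {H K : G.Subgraph} (h : H ≤ K)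
    (hH : H.coe.Connected) {a b : V} (ha : a ∈ H.verts) (hb : b ∈ H.verts)
    (ha' : a ∈ K.verts) (hb' : b ∈ K.verts) : K.coe.Reachable ⟨a, ha'⟩ ⟨b, hb'⟩ := by
  have hr := hH.preconnected ⟨a, ha⟩ ⟨b, hb⟩
  have := hr.map (SimpleGraph.Subgraph.inclusion h)
  convert this using 2 <;> rfl

lemma merged_connected {G : SimpleGraph V} {Tk Tk' : G.Subgraph}
    (hTk : Tk.coe.Connected) (hTk' : Tk'.coe.Connected) {u v : V}
    (hu : u ∈ Tk.verts) (hv : v ∈ Tk'.verts) (huv : G.Adj u v) :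
    (ind G (Tk.verts ∪ Tk'.verts)).coe.Connected := by
  set H := ind G (Tk.verts ∪ Tk'.verts) with hH
  have hkle : Tk ≤ H := by
    constructor
    · exact fun a ha => Or.inl ha
    · intro a b hab
      exact ⟨Or.inl (Tk.edge_vert hab), Or.inl (Tk.edge_vert hab.symm), Tk.adj_sub hab⟩
  have hk'le : Tk' ≤ H := by
    constructor
    · exact fun a ha => Or.inr ha
    · intro a b hab
      exact ⟨Or.inr (Tk'.edge_vert hab), Or.inr (Tk'.edge_vert hab.symm), Tk'.adj_sub hab⟩
  have huH : u ∈ H.verts := Or.inl hu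
  have hvH : v ∈ H.verts := Or.inr hv
  have hadj : H.coe.Adj ⟨v, hvH⟩ ⟨u, huH⟩ := ⟨hvH, huH, huv.symm⟩
  have key : ∀ c : H.verts, H.coe.Reachable c ⟨u, huH⟩ := by
    rintro ⟨cv, hc | hc⟩
    · exact reach_in_sup hkle hTk hc hu _ _
    · exact (reach_in_sup hk'le hTk' hc hv _ _).trans hadj.reachable
  haveI : Nonempty H.verts := ⟨⟨u, huH⟩⟩
  refine Connected.mk ?_
  intro a b
  exact (key a).trans (key b).symm

lemma crossEdges_nonempty_of_spanning {G : SimpleGraph V} {s t : Set V} {Tl : G.Subgraph}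
    (hconn : Tl.coe.Connected) (hverts : Tl.verts = s ∪ t) (hs : s.Nonempty)
    (ht : t.Nonempty) (hdisj : Disjoint s t) : (crossEdges G s t).Nonempty := by
  obtain ⟨u, hu⟩ := hs
  obtain ⟨v, hv⟩ := ht
  have huT : u ∈ Tl.verts := by rw [hverts]; exact Or.inl hu
  have hvT : v ∈ Tl.verts := by rw [hverts]; exact Or.inr hv
  obtain ⟨p⟩ := hconn.preconnected ⟨u, huT⟩ ⟨v, hvT⟩
  obtain ⟨d, _, hdf, hds⟩ := p.exists_boundary_dart {x : Tl.verts | ↑x ∈ s} (by exact hu)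
    (fun hvs => (hdisj.ne_of_mem hvs hv) rfl)
  have hadj : Tl.Adj ↑d.fst ↑d.snd := d.adj
  have hsnd : ↑d.snd ∈ t := by
    have h2 : (d.snd : V) ∈ s ∪ t := hverts ▸ d.snd.2
    exact h2.resolve_left hds
  exact ⟨s(↑d.fst, ↑d.snd), Tl.adj_sub hadj, ↑d.fst, ↑d.snd, rfl, hdf, hsnd⟩


instance instFiniteSubgraph {G : SimpleGraph V} : Finite G.Subgraph := by
  have hinj : Function.Injective (fun H : G.Subgraph => (H.verts, H.Adj)) := by
    intro H H' h
    simp only [Prod.mk.injEq] at h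
    exact SimpleGraph.Subgraph.ext h.1 h.2
  exact Finite.of_injective _ hinj

instance instFiniteForestPlan {G : SimpleGraph V} {r : ℕ} : Finite (ForestPlan G r) := by
  have hinj : Function.Injective (fun F : ForestPlan G r => F.trees) := by
    intro F F' h
    cases F; cases F'; simpa using h
  exact Finite.of_injective _ hinj

lemma ForestPlan.ext' {G : SimpleGraph V} {r : ℕ} {F F' : ForestPlan G r}
    (h : F.trees = F'.trees) : F = F' := by
  cases F; cases F'; simpa using h

lemma verts_nonempty {G : SimpleGraph V} {r : ℕ} (F : ForestPlan G r) {T : G.Subgraph}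
    (hT : T ∈ F.trees) : T.verts.Nonempty := by
  have := (F.isTree T hT).isConnected.nonempty
  exact Set.nonempty_coe_sort.mp this

lemma verts_injOn {G : SimpleGraph V} {r : ℕ} (F : ForestPlan G r) :
    Set.InjOn Subgraph.verts F.trees := by
  intro T hT T' hT' h
  by_contra hne
  have hd := F.trees_disjoint T hT T' hT' hne
  obtain ⟨v, hv⟩ := verts_nonempty F hT
  exact hd.ne_of_mem hv (h ▸ hv) rfl

/-- Auxiliary facts about a merged vertex set. -/
lemma verts_ne_merged {G : SimpleGraph V} {r : ℕ} (F : ForestPlan G r) {Tk Tk' T : G.Subgraph}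
    (hk : Tk ∈ F.trees) (hk' : Tk' ∈ F.trees) (hne : Tk ≠ Tk') (hT : T ∈ F.trees) :
    T.verts ≠ Tk.verts ∪ Tk'.verts := by
  intro h
  by_cases hTk : T = Tk
  · subst hTk
    obtain ⟨v, hv⟩ := verts_nonempty F hk'
    exact (F.trees_disjoint T hT Tk' hk' hne).ne_of_mem (h ▸ Or.inr hv) hv rfl
  · obtain ⟨v, hv⟩ := verts_nonempty F hk
    exact (F.trees_disjoint T hT Tk hk hTk).ne_of_mem (h ▸ Or.inl hv) hv rfl

lemma merged_not_mem {G : SimpleGraph V} {r : ℕ} (F : ForestPlan G r) {Tk Tk' Tl : G.Subgraph}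
    (hk : Tk ∈ F.trees) (hk' : Tk' ∈ F.trees) (hne : Tk ≠ Tk')
    (hverts : Tl.verts = Tk.verts ∪ Tk'.verts) : Tl ∉ F.trees :=
  fun h => verts_ne_merged F hk hk' hne h hverts

/-- Structure of a 1-region tree ancestor. -/
lemma anc_struct {G : SimpleGraph V} {r : ℕ} (hr : 1 < r) (Fr : ForestPlan G r)
    (Fp : ForestPlan G (r - 1)) (hanc : ForestAncestor G Fp Fr) :
    ∃ Tk Tk' Tl : G.Subgraph, Tk ∈ Fr.trees ∧ Tk' ∈ Fr.trees ∧ Tk ≠ Tk' ∧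
      Fr.trees \ Fp.trees = {Tk, Tk'} ∧ Fp.trees \ Fr.trees = {Tl} ∧
      Fp.trees = (Fr.trees \ {Tk, Tk'}) ∪ {Tl} ∧ Tl.verts = Tk.verts ∪ Tk'.verts := by
  obtain ⟨Tl, hTl⟩ := Set.ncard_eq_one.mp hanc
  have hcommon : Fp.trees \ (Fp.trees \ Fr.trees) = Fp.trees ∩ Fr.trees :=
    Set.diff_diff_right_self _ _
  have hcc : (Fp.trees ∩ Fr.trees).ncard = r - 2 := by
    rw [← hcommon, Set.ncard_diff (Set.diff_subset) (Set.toFinite _), hanc, Fp.ncard_trees]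
    omega
  have hsub : Fp.trees ∩ Fr.trees ⊆ Fr.trees := Set.inter_subset_right
  have hD : (Fr.trees \ (Fp.trees ∩ Fr.trees)) = Fr.trees \ Fp.trees := by
    ext x; simp only [Set.mem_diff, Set.mem_inter_iff]; tauto
  have hD2 : (Fr.trees \ Fp.trees).ncard = 2 := by
    rw [← hD, Set.ncard_diff hsub (Set.toFinite _), hcc, Fr.ncard_trees]
    omega
  obtain ⟨Tk, Tk', hne, hpair⟩ := Set.ncard_eq_two.mp hD2
  have hkmem : Tk ∈ Fr.trees := by
    have : Tk ∈ Fr.trees \ Fp.trees := by rw [hpair]; exact Or.inl rfl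
    exact this.1
  have hk'mem : Tk' ∈ Fr.trees := by
    have : Tk' ∈ Fr.trees \ Fp.trees := by rw [hpair]; exact Or.inr rfl
    exact this.1
  have hknotp : Tk ∉ Fp.trees := by
    have : Tk ∈ Fr.trees \ Fp.trees := by rw [hpair]; exact Or.inl rfl
    exact this.2
  have hk'notp : Tk' ∉ Fp.trees := by
    have : Tk' ∈ Fr.trees \ Fp.trees := by rw [hpair]; exact Or.inr rfl
    exact this.2
  have hTlmem : Tl ∈ Fp.trees := by
    have : Tl ∈ Fp.trees \ Fr.trees := by rw [hTl]; rfl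
    exact this.1
  have hTlnot : Tl ∉ Fr.trees := by
    have : Tl ∈ Fp.trees \ Fr.trees := by rw [hTl]; rfl
    exact this.2
  have htrees : Fp.trees = (Fr.trees \ {Tk, Tk'}) ∪ {Tl} := by
    rw [← hpair]
    ext x
    constructor
    · intro hx
      by_cases hxl : x = Tl
      · exact Or.inr hxl
      · left
        refine ⟨?_, fun hx2 => hx2.2 hx⟩
        by_contra hxr
        have : x ∈ Fp.trees \ Fr.trees := ⟨hx, hxr⟩
        rw [hTl] at this
        exact hxl this
    · rintro (⟨hx1, hx2⟩ | hx)
      · by_contra hxp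
        exact hx2 ⟨hx1, hxp⟩
      · rw [hx]; exact hTlmem
  have hverts : Tl.verts = Tk.verts ∪ Tk'.verts := by
    ext x
    constructor
    · intro hx
      obtain ⟨T, hTmem, hxT⟩ := Fr.trees_cover x
      by_cases hTp : T ∈ Fp.trees
      · have hTne : T ≠ Tl := fun h => hTlnot (h ▸ hTmem)
        exact absurd rfl ((Fp.trees_disjoint T hTp Tl hTlmem hTne).ne_of_mem hxT hx)
      · have : T ∈ Fr.trees \ Fp.trees := ⟨hTmem, hTp⟩
        rw [hpair] at this
        rcases this with rfl | rfl
        · exact Or.inl hxT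
        · exact Or.inr hxT
    · intro hx
      obtain ⟨T, hTmem, hxT⟩ := Fp.trees_cover x
      by_cases hTeq : T = Tl
      · exact hTeq ▸ hxT
      · exfalso
        have hTr : T ∈ Fr.trees := by
          by_contra hTr
          have : T ∈ Fp.trees \ Fr.trees := ⟨hTmem, hTr⟩
          rw [hTl] at this
          exact hTeq this
        rcases hx with hx | hx
        · have hTne : T ≠ Tk := fun h => hknotp (h ▸ hTmem)
          exact (Fr.trees_disjoint T hTr Tk hkmem hTne).ne_of_mem hxT hx rfl
        · have hTne : T ≠ Tk' := fun h => hk'notp (h ▸ hTmem)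
          exact (Fr.trees_disjoint T hTr Tk' hk'mem hTne).ne_of_mem hxT hx rfl
  exact ⟨Tk, Tk', Tl, hkmem, hk'mem, hne, hpair, hTl, htrees, hverts⟩



/-- Construct a 1-region tree ancestor by merging `Tk` and `Tk'` along a spanning tree `Tl`. -/
def mkAncestor {G : SimpleGraph V} {r : ℕ} (hr : 1 < r) (Fr : ForestPlan G r)
    {Tk Tk' : G.Subgraph} (hk : Tk ∈ Fr.trees) (hk' : Tk' ∈ Fr.trees) (hne : Tk ≠ Tk')
    {Tl : G.Subgraph} (hTl : IsSpanningTreeOf G Tl (ind G (Tk.verts ∪ Tk'.verts))) :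
    ForestPlan G (r - 1) where
  trees := (Fr.trees \ {Tk, Tk'}) ∪ {Tl}
  ncard_trees := by
    have hTlverts : Tl.verts = Tk.verts ∪ Tk'.verts := hTl.2.1
    have hTlnot : Tl ∉ Fr.trees := merged_not_mem Fr hk hk' hne hTlverts
    have hpairsub : ({Tk, Tk'} : Set G.Subgraph) ⊆ Fr.trees := by
      intro x hx; rcases hx with rfl | rfl; exacts [hk, hk']
    have hdisj : Disjoint (Fr.trees \ {Tk, Tk'}) ({Tl} : Set G.Subgraph) := by
      rw [Set.disjoint_singleton_right]
      exact fun h => hTlnot h.1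
    rw [Set.ncard_union_eq hdisj (Set.toFinite _) (Set.toFinite _),
      Set.ncard_diff hpairsub (Set.toFinite _), Set.ncard_pair hne, Fr.ncard_trees,
      Set.ncard_singleton]
    omega
  isTree := by
    rintro T (⟨hT, -⟩ | hT)
    · exact Fr.isTree T hT
    · rw [Set.mem_singleton_iff] at hT
      exact hT ▸ hTl.2.2
  trees_disjoint := by
    have hTlverts : Tl.verts = Tk.verts ∪ Tk'.verts := hTl.2.1
    rintro T (⟨hT, hTp⟩ | hT) T' (⟨hT', hT'p⟩ | hT') hne'
    · exact Fr.trees_disjoint T hT T' hT' hne'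
    · rw [Set.mem_singleton_iff] at hT'
      subst hT'
      rw [hTlverts, Set.disjoint_union_right]
      constructor
      · exact Fr.trees_disjoint T hT Tk hk fun h => hTp (h ▸ Or.inl rfl)
      · exact Fr.trees_disjoint T hT Tk' hk' fun h => hTp (h ▸ Or.inr rfl)
    · rw [Set.mem_singleton_iff] at hT
      subst hT
      rw [hTlverts, Set.disjoint_union_left]
      constructor
      · exact (Fr.trees_disjoint T' hT' Tk hk fun h => hT'p (h ▸ Or.inl rfl)).symm
      · exact (Fr.trees_disjoint T' hT' Tk' hk' fun h => hT'p (h ▸ Or.inr rfl)).symm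
    · rw [Set.mem_singleton_iff] at hT hT'
      exact absurd (hT.trans hT'.symm) hne'
  trees_cover := by
    have hTlverts : Tl.verts = Tk.verts ∪ Tk'.verts := hTl.2.1
    intro v
    obtain ⟨T, hT, hv⟩ := Fr.trees_cover v
    by_cases hTp : T ∈ ({Tk, Tk'} : Set G.Subgraph)
    · refine ⟨Tl, Or.inr rfl, ?_⟩
      rw [hTlverts]
      rcases hTp with rfl | hTp
      · exact Or.inl hv
      · rw [Set.mem_singleton_iff] at hTp
        exact Or.inr (hTp ▸ hv)
    · exact ⟨T, Or.inl ⟨hT, hTp⟩, hv⟩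

lemma mkAncestor_trees {G : SimpleGraph V} {r : ℕ} (hr : 1 < r) (Fr : ForestPlan G r)
    {Tk Tk' : G.Subgraph} (hk : Tk ∈ Fr.trees) (hk' : Tk' ∈ Fr.trees) (hne : Tk ≠ Tk')
    {Tl : G.Subgraph} (hTl : IsSpanningTreeOf G Tl (ind G (Tk.verts ∪ Tk'.verts))) :
    (mkAncestor hr Fr hk hk' hne hTl).trees = (Fr.trees \ {Tk, Tk'}) ∪ {Tl} := rfl

lemma mkAncestor_anc {G : SimpleGraph V} {r : ℕ} (hr : 1 < r) (Fr : ForestPlan G r)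
    {Tk Tk' : G.Subgraph} (hk : Tk ∈ Fr.trees) (hk' : Tk' ∈ Fr.trees) (hne : Tk ≠ Tk')
    {Tl : G.Subgraph} (hTl : IsSpanningTreeOf G Tl (ind G (Tk.verts ∪ Tk'.verts))) :
    (mkAncestor hr Fr hk hk' hne hTl).trees \ Fr.trees = {Tl} := by
  have hTlnot : Tl ∉ Fr.trees := merged_not_mem Fr hk hk' hne hTl.2.1
  rw [mkAncestor_trees]
  ext x
  constructor
  · rintro ⟨⟨hx, -⟩ | hx, hx2⟩
    · exact absurd hx hx2
    · exact hx
  · rintro hx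
    rw [Set.mem_singleton_iff] at hx
    subst hx
    exact ⟨Or.inr rfl, hTlnot⟩

lemma mkAncestor_fiber {G : SimpleGraph V} {r : ℕ} (hr : 1 < r) (Fr : ForestPlan G r)
    {Tk Tk' : G.Subgraph} (hk : Tk ∈ Fr.trees) (hk' : Tk' ∈ Fr.trees) (hne : Tk ≠ Tk')
    {Tl : G.Subgraph} (hTl : IsSpanningTreeOf G Tl (ind G (Tk.verts ∪ Tk'.verts))) :
    Fr.trees \ (mkAncestor hr Fr hk hk' hne hTl).trees = {Tk, Tk'} := by
  have hTlnot : Tl ∉ Fr.trees := merged_not_mem Fr hk hk' hne hTl.2.1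
  rw [mkAncestor_trees]
  ext x
  constructor
  · rintro ⟨hx, hx2⟩
    by_contra hxp
    exact hx2 (Or.inl ⟨hx, hxp⟩)
  · intro hx
    have hxr : x ∈ Fr.trees := by
      rcases hx with rfl | hx
      · exact hk
      · rw [Set.mem_singleton_iff] at hx
        exact hx ▸ hk'
    refine ⟨hxr, ?_⟩
    rintro (⟨-, hx2⟩ | hx2)
    · exact hx2 hx
    · rw [Set.mem_singleton_iff] at hx2
      exact hTlnot (hx2 ▸ hxr)

lemma mkAncestor_forestAncestor {G : SimpleGraph V} {r : ℕ} (hr : 1 < r) (Fr : ForestPlan G r)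
    {Tk Tk' : G.Subgraph} (hk : Tk ∈ Fr.trees) (hk' : Tk' ∈ Fr.trees) (hne : Tk ≠ Tk')
    {Tl : G.Subgraph} (hTl : IsSpanningTreeOf G Tl (ind G (Tk.verts ∪ Tk'.verts))) :
    ForestAncestor G (mkAncestor hr Fr hk hk' hne hTl) Fr := by
  rw [ForestAncestor, mkAncestor_anc, Set.ncard_singleton]

lemma image_verts_diff_pair {G : SimpleGraph V} {r : ℕ} (Fr : ForestPlan G r)
    {Tk Tk' : G.Subgraph} (hk : Tk ∈ Fr.trees) (hk' : Tk' ∈ Fr.trees) :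
    Subgraph.verts '' (Fr.trees \ {Tk, Tk'}) = forestBlocks G Fr \ {Tk.verts, Tk'.verts} := by
  ext x
  constructor
  · rintro ⟨T, ⟨hT, hTp⟩, rfl⟩
    refine ⟨⟨T, hT, rfl⟩, ?_⟩
    rintro (h | h)
    · exact hTp (Or.inl (verts_injOn Fr hT hk h))
    · rw [Set.mem_singleton_iff] at h
      exact hTp (Or.inr (by rw [Set.mem_singleton_iff]; exact verts_injOn Fr hT hk' h))
  · rintro ⟨⟨T, hT, rfl⟩, hx⟩
    refine ⟨T, ⟨hT, ?_⟩, rfl⟩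
    rintro (rfl | h)
    · exact hx (Or.inl rfl)
    · rw [Set.mem_singleton_iff] at h
      subst h
      exact hx (Or.inr rfl)

lemma mkAncestor_blocks {G : SimpleGraph V} {r : ℕ} (hr : 1 < r) (Fr : ForestPlan G r)
    {Tk Tk' : G.Subgraph} (hk : Tk ∈ Fr.trees) (hk' : Tk' ∈ Fr.trees) (hne : Tk ≠ Tk')
    {Tl : G.Subgraph} (hTl : IsSpanningTreeOf G Tl (ind G (Tk.verts ∪ Tk'.verts))) :
    forestBlocks G (mkAncestor hr Fr hk hk' hne hTl) =
      (forestBlocks G Fr \ {Tk.verts, Tk'.verts}) ∪ {Tk.verts ∪ Tk'.verts} := by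
  rw [forestBlocks, mkAncestor_trees, Set.image_union, Set.image_singleton,
    image_verts_diff_pair Fr hk hk', hTl.2.1, Subgraph.induce_verts]


lemma tau_pos {G : SimpleGraph V} {H : G.Subgraph} (h : ∃ T, IsSpanningTreeOf G T H) :
    0 < tau G H := by
  rw [tau, Set.ncard_pos (Set.toFinite _)]
  exact h

lemma finprod_mem_pos {α : Type*} {s : Set α} {f : α → ℝ} (hs : s.Finite)
    (h : ∀ x ∈ s, 0 < f x) : 0 < ∏ᶠ x ∈ s, f x := by
  rw [← hs.coe_toFinset, finprod_mem_coe_finset]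
  exact Finset.prod_pos (fun x hx => h x (hs.mem_toFinset.mp hx))

lemma finsum_mem_const' {α : Type*} (s : Set α) (hs : s.Finite) (c : ℝ) :
    ∑ᶠ x ∈ s, c = s.ncard * c := by
  rw [← hs.coe_toFinset, finsum_mem_coe_finset, Finset.sum_const, nsmul_eq_mul,
    Set.ncard_coe_finset]


private lemma alg (x t y z wr wn pρ pt f e : ℝ) (hx : x ≠ 0) (hwr : wr ≠ 0)
    (hy : y ≠ 0) (hz : z ≠ 0) :
    x * (wn * (pρ * t) * (pt⁻¹ * x⁻¹) * (f * e / x)) =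
      wr * (pρ * (y * z)) * (pt⁻¹ * (wn / wr) * (t / x / (y * z)) * f * e) := by
  have hx' : x * x⁻¹ = 1 := mul_inv_cancel₀ hx
  have hwr' : wr * wr⁻¹ = 1 := mul_inv_cancel₀ hwr
  have hy' : y * y⁻¹ = 1 := mul_inv_cancel₀ hy
  have hz' : z * z⁻¹ = 1 := mul_inv_cancel₀ hz
  field_simp

lemma pair_sum (G : SimpleGraph V) (r : ℕ) (hr : 1 < r) (Fr : ForestPlan G r)
    (W : Set (Set V) → ℝ) (hWr : 0 < W (forestBlocks G Fr))
    (ρ : ℝ) (p : G.Subgraph → Sym2 V → ℝ)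
    (φ : Set V → Set (Set V) → ℝ)
    (γ : Set (Set V) → ℝ)
    (hγ : ∀ P : Set (Set V), γ P = W P * ∏ᶠ B ∈ P, (tau G (ind G B) : ℝ) ^ ρ)
    (γt : ForestPlan G (r - 1) → ℝ)
    (hγt : ∀ Fp : ForestPlan G (r - 1),
      γt Fp = γ (forestBlocks G Fp) *
        ∏ᶠ T ∈ Fp.trees, ((tau G (ind G T.verts) : ℝ))⁻¹)
    (M : ForestPlan G (r - 1) → ℝ)
    (hM : ∀ Fp : ForestPlan G (r - 1), ForestAncestor G Fp Fr →
      ∀ Tl ∈ Fp.trees \ Fr.trees,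
        ∀ Tk ∈ Fr.trees \ Fp.trees, ∀ Tk' ∈ Fr.trees \ Fp.trees, Tk ≠ Tk' →
          M Fp = φ Tl.verts (forestBlocks G Fp) * EffB G p Tk Tk' /
            (tau G (ind G Tl.verts) : ℝ))
    (g : Set G.Subgraph → ℝ)
    (hg : ∀ Tk ∈ Fr.trees, ∀ Tk' ∈ Fr.trees, Tk ≠ Tk' →
      (crossEdges G Tk.verts Tk'.verts).Nonempty →
      g {Tk, Tk'} =
        (∏ᶠ B ∈ forestBlocks G Fr \ {Tk.verts, Tk'.verts}, (tau G (ind G B) : ℝ))⁻¹ *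
          (W ((forestBlocks G Fr \ {Tk.verts, Tk'.verts}) ∪ {Tk.verts ∪ Tk'.verts}) /
            W (forestBlocks G Fr)) *
          ((tau G (ind G (Tk.verts ∪ Tk'.verts)) : ℝ) ^ (ρ - 1) /
            ((tau G (ind G Tk.verts) : ℝ) ^ ρ * (tau G (ind G Tk'.verts) : ℝ) ^ ρ)) *
          φ (Tk.verts ∪ Tk'.verts)
            ((forestBlocks G Fr \ {Tk.verts, Tk'.verts}) ∪ {Tk.verts ∪ Tk'.verts}) *
          EffB G p Tk Tk')
    (Tk Tk' : G.Subgraph) (hk : Tk ∈ Fr.trees) (hk' : Tk' ∈ Fr.trees) (hne : Tk ≠ Tk')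
    (hcr : (crossEdges G Tk.verts Tk'.verts).Nonempty) :
    ∑ᶠ Fp ∈ {Fp : ForestPlan G (r - 1) |
        ForestAncestor G Fp Fr ∧ Fr.trees \ Fp.trees = {Tk, Tk'}}, γt Fp * M Fp =
      γ (forestBlocks G Fr) * g {Tk, Tk'} := by
  classical
  set m := Tk.verts ∪ Tk'.verts with hm
  set ST := {Tl : G.Subgraph | IsSpanningTreeOf G Tl (ind G m)} with hST
  set fib := {Fp : ForestPlan G (r - 1) |
    ForestAncestor G Fp Fr ∧ Fr.trees \ Fp.trees = {Tk, Tk'}} with hfib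
  -- a spanning tree of the merged region exists
  obtain ⟨e, heE, u, v, he, hu, hv⟩ := hcr
  have huv : G.Adj u v := by rwa [he, SimpleGraph.mem_edgeSet] at heE
  have hconn : (ind G m).coe.Connected :=
    merged_connected (Fr.isTree Tk hk).isConnected (Fr.isTree Tk' hk').isConnected hu hv huv
  obtain ⟨Tl₀, hTl₀⟩ := exists_isSpanningTreeOf G (ind G m) hconn
  have hTl₀' : Tl₀ ∈ ST := hTl₀
  -- the canonical map from spanning trees to ancestors
  set ψ : G.Subgraph → ForestPlan G (r - 1) := fun Tl =>
    if h : Tl ∈ ST then mkAncestor hr Fr hk hk' hne h else mkAncestor hr Fr hk hk' hne hTl₀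
    with hψ
  have hψ_eq : ∀ Tl (h : Tl ∈ ST), ψ Tl = mkAncestor hr Fr hk hk' hne h := by
    intro Tl h
    simp only [hψ, dif_pos h]
  -- basic positivity facts
  have hτm : 0 < tau G (ind G m) := tau_pos ⟨Tl₀, hTl₀⟩
  have hτk : 0 < tau G (ind G Tk.verts) :=
    tau_pos ⟨Tk, tree_spans G Tk (Fr.isTree Tk hk)⟩
  have hτk' : 0 < tau G (ind G Tk'.verts) :=
    tau_pos ⟨Tk', tree_spans G Tk' (Fr.isTree Tk' hk')⟩
  set baseB := forestBlocks G Fr \ {Tk.verts, Tk'.verts} with hbaseB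
  have hmnot : m ∉ baseB := by
    rintro ⟨⟨T, hT, hTm⟩, -⟩
    exact verts_ne_merged Fr hk hk' hne hT (hTm.trans hm)
  have hdisjB : Disjoint baseB ({m} : Set (Set V)) := by
    rw [Set.disjoint_singleton_right]; exact hmnot
  have hsplitB : ∀ f : Set V → ℝ, ∏ᶠ B ∈ baseB ∪ {m}, f B = (∏ᶠ B ∈ baseB, f B) * f m := by
    intro f
    rw [finprod_mem_union hdisjB (Set.toFinite _) (Set.toFinite _), finprod_mem_singleton]
  have hbase_im : Subgraph.verts '' (Fr.trees \ {Tk, Tk'}) = baseB :=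
    image_verts_diff_pair Fr hk hk'
  have hinj : Set.InjOn Subgraph.verts (Fr.trees \ {Tk, Tk'}) :=
    (verts_injOn Fr).mono Set.diff_subset
  -- the per-ancestor value
  set Pρ := ∏ᶠ B ∈ baseB, (tau G (ind G B) : ℝ) ^ ρ with hPρ
  set Pt := ∏ᶠ B ∈ baseB, (tau G (ind G B) : ℝ) with hPt
  set E := EffB G p Tk Tk' with hE
  set c : ℝ := W (baseB ∪ {m}) * (Pρ * (tau G (ind G m) : ℝ) ^ ρ) *
    (Pt⁻¹ * ((tau G (ind G m) : ℝ))⁻¹) *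
    (φ m (baseB ∪ {m}) * E / (tau G (ind G m) : ℝ)) with hc
  have hval : ∀ Tl ∈ ST, γt (ψ Tl) * M (ψ Tl) = c := by
    intro Tl h
    have hTlverts : Tl.verts = m := h.2.1
    rw [hψ_eq Tl h]
    set A := mkAncestor hr Fr hk hk' hne h with hA
    have hblocks : forestBlocks G A = baseB ∪ {m} :=
      mkAncestor_blocks hr Fr hk hk' hne h
    have htrees : A.trees = (Fr.trees \ {Tk, Tk'}) ∪ {Tl} :=
      mkAncestor_trees hr Fr hk hk' hne h
    have hTlnotbase : Tl ∉ Fr.trees \ {Tk, Tk'} :=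
      fun hx => merged_not_mem Fr hk hk' hne hTlverts hx.1
    have hγtA : γt A = W (baseB ∪ {m}) * (Pρ * (tau G (ind G m) : ℝ) ^ ρ) *
        (Pt⁻¹ * ((tau G (ind G m) : ℝ))⁻¹) := by
      rw [hγt A, hblocks, hγ, hsplitB, htrees,
        finprod_mem_union (by rw [Set.disjoint_singleton_right]; exact hTlnotbase)
          (Set.toFinite _) (Set.toFinite _), finprod_mem_singleton, hTlverts]
      have him : ∏ᶠ T ∈ Fr.trees \ {Tk, Tk'}, ((tau G (ind G T.verts) : ℝ))⁻¹ =
          ∏ᶠ B ∈ baseB, ((tau G (ind G B) : ℝ))⁻¹ := by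
        rw [← hbase_im, finprod_mem_image hinj]
      have hPinv : ∏ᶠ B ∈ baseB, ((tau G (ind G B) : ℝ))⁻¹ = Pt⁻¹ := by
        rw [hPt, finprod_mem_inv_distrib _ (Set.toFinite _)]
      rw [him, hPinv]
    have hMA : M A = φ m (baseB ∪ {m}) * E / (tau G (ind G m) : ℝ) := by
      have h1 : Tl ∈ A.trees \ Fr.trees := by
        rw [mkAncestor_anc hr Fr hk hk' hne h]; rfl
      have h2 : Tk ∈ Fr.trees \ A.trees := by
        rw [mkAncestor_fiber hr Fr hk hk' hne h]; exact Or.inl rfl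
      have h3 : Tk' ∈ Fr.trees \ A.trees := by
        rw [mkAncestor_fiber hr Fr hk hk' hne h]; exact Or.inr rfl
      rw [hM A (mkAncestor_forestAncestor hr Fr hk hk' hne h) Tl h1 Tk h2 Tk' h3 hne,
        hblocks, hTlverts]
    rw [hγtA, hMA, hc]
  -- the fiber is the bijective image of the spanning trees
  have hbij : Set.BijOn ψ ST fib := by
    refine ⟨?_, ?_, ?_⟩
    · intro Tl h
      rw [hψ_eq Tl h]
      exact ⟨mkAncestor_forestAncestor hr Fr hk hk' hne h,
        mkAncestor_fiber hr Fr hk hk' hne h⟩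
    · intro Tl h Tl' h' heq
      rw [hψ_eq Tl h, hψ_eq Tl' h'] at heq
      have : ((Fr.trees \ {Tk, Tk'}) ∪ {Tl} : Set G.Subgraph) =
          (Fr.trees \ {Tk, Tk'}) ∪ {Tl'} := by
        rw [← mkAncestor_trees hr Fr hk hk' hne h, ← mkAncestor_trees hr Fr hk hk' hne h', heq]
      have hTlmem : Tl ∈ (Fr.trees \ {Tk, Tk'}) ∪ {Tl'} := this ▸ Or.inr rfl
      rcases hTlmem with hx | hx
      · exact absurd hx.1 (merged_not_mem Fr hk hk' hne h.2.1)
      · exact hx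
    · rintro Fp ⟨hanc, hdiff⟩
      obtain ⟨Tk₀, Tk'₀, Tl, hk₀, hk'₀, hne₀, hpair₀, hTl₀d, htrees₀, hverts₀⟩ :=
        anc_struct hr Fr Fp hanc
      have hpeq : ({Tk₀, Tk'₀} : Set G.Subgraph) = {Tk, Tk'} := by
        rw [← hpair₀, hdiff]
      have hvm : Tl.verts = m := by
        rcases Set.pair_eq_pair_iff.mp hpeq with ⟨rfl, rfl⟩ | ⟨rfl, rfl⟩
        · exact hverts₀
        · rw [hverts₀, hm, Set.union_comm]
      have hTlmem : Tl ∈ Fp.trees := by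
        have : Tl ∈ Fp.trees \ Fr.trees := by rw [hTl₀d]; rfl
        exact this.1
      have hTlST : Tl ∈ ST := by
        have := tree_spans G Tl (Fp.isTree Tl hTlmem)
        rw [hST]
        simp only [Set.mem_setOf_eq]
        rw [← hvm]
        exact this
      refine ⟨Tl, hTlST, ?_⟩
      apply ForestPlan.ext'
      rw [hψ_eq Tl hTlST, mkAncestor_trees, htrees₀, hpeq]
  -- sum over the fiber
  have hsum : ∑ᶠ Fp ∈ fib, γt Fp * M Fp = (tau G (ind G m) : ℝ) * c := by
    have h1 : ∑ᶠ Tl ∈ ST, c = ∑ᶠ Fp ∈ fib, γt Fp * M Fp :=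
      finsum_mem_eq_of_bijOn (f := fun _ => c) ψ hbij (fun Tl h => (hval Tl h).symm)
    rw [← h1, finsum_mem_const' ST (Set.toFinite _) c]
    congr 1
  rw [hsum, hg Tk hk Tk' hk' hne ⟨e, heE, u, v, he, hu, hv⟩, hγ]
  rw [← hbaseB, ← hm, ← hPt]
  have hsub : ({Tk.verts, Tk'.verts} : Set (Set V)) ⊆ forestBlocks G Fr := by
    rintro x (rfl | hx)
    · exact ⟨Tk, hk, rfl⟩
    · rw [Set.mem_singleton_iff] at hx
      exact ⟨Tk', hk', hx.symm⟩
  have hvne : Tk.verts ≠ Tk'.verts := fun hh => hne (verts_injOn Fr hk hk' hh)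
  have hblocksFr : forestBlocks G Fr = baseB ∪ {Tk.verts, Tk'.verts} :=
    (Set.diff_union_of_subset hsub).symm
  have hsplit2 : ∏ᶠ B ∈ forestBlocks G Fr, (tau G (ind G B) : ℝ) ^ ρ =
      Pρ * ((tau G (ind G Tk.verts) : ℝ) ^ ρ * (tau G (ind G Tk'.verts) : ℝ) ^ ρ) := by
    rw [hblocksFr, finprod_mem_union Set.disjoint_sdiff_left (Set.toFinite _) (Set.toFinite _),
      finprod_mem_pair hvne, hPρ]
  rw [hsplit2, hc, hE]
  have hτm0 : (tau G (ind G m) : ℝ) ≠ 0 := Nat.cast_ne_zero.mpr hτm.ne'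
  have hτmpos : (0 : ℝ) < (tau G (ind G m) : ℝ) := Nat.cast_pos.mpr hτm
  have hτkpos : (0 : ℝ) < (tau G (ind G Tk.verts) : ℝ) := Nat.cast_pos.mpr hτk
  have hτk'pos : (0 : ℝ) < (tau G (ind G Tk'.verts) : ℝ) := Nat.cast_pos.mpr hτk'
  have hkρ : (tau G (ind G Tk.verts) : ℝ) ^ ρ ≠ 0 := (Real.rpow_pos_of_pos hτkpos ρ).ne'
  have hk'ρ : (tau G (ind G Tk'.verts) : ℝ) ^ ρ ≠ 0 := (Real.rpow_pos_of_pos hτk'pos ρ).ne'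
  have hWr0 : W (forestBlocks G Fr) ≠ 0 := hWr.ne'
  rw [Real.rpow_sub_one hτm0]
  exact alg _ _ _ _ _ _ _ _ _ _ hτm0 hWr0 hkρ hk'ρ

/-- Forest-space marginal-proposal identity:
`Σ_{Fp ∈ A₁(Fr)} γ̃(Fp)·M(Fr|Fp) = γ(ξr) · Σ_{{T_k,T_{k'}} adjacent in Fr}
(∏_{other regions G_n} τ(G_n))⁻¹ · (W(ξ̃)/W(ξr)) ·
τ(G[V(T_k)∪V(T_{k'})])^{ρ-1}/(τ(G[V(T_k)])^ρ·τ(G[V(T_{k'})])^ρ) · φ(…|ξ̃) ·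
EffB(T_k,T_{k'})`, where `γ̃`, `M`, and the unordered-pair summand `g` are pinned by
`hγt`, `hM`, `hg` respectively. -/
theorem stmt_19 (G : SimpleGraph V) (r : ℕ) (hr : 1 < r) (Fr : ForestPlan G r)
    (W : Set (Set V) → ℝ) (hW : ∀ P, 0 ≤ W P) (hWr : 0 < W (forestBlocks G Fr))
    (ρ : ℝ)
    (p : G.Subgraph → Sym2 V → ℝ) (hp : ∀ T e, 0 ≤ p T e)
    (φ : Set V → Set (Set V) → ℝ)
    (γ : Set (Set V) → ℝ)
    (hγ : ∀ P : Set (Set V), γ P = W P * ∏ᶠ B ∈ P, (tau G (ind G B) : ℝ) ^ ρ)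
    (γt : ForestPlan G (r - 1) → ℝ)
    (hγt : ∀ Fp : ForestPlan G (r - 1),
      γt Fp = γ (forestBlocks G Fp) *
        ∏ᶠ T ∈ Fp.trees, ((tau G (ind G T.verts) : ℝ))⁻¹)
    (M : ForestPlan G (r - 1) → ℝ)
    (hM : ∀ Fp : ForestPlan G (r - 1), ForestAncestor G Fp Fr →
      ∀ Tl ∈ Fp.trees \ Fr.trees,
        ∀ Tk ∈ Fr.trees \ Fp.trees, ∀ Tk' ∈ Fr.trees \ Fp.trees, Tk ≠ Tk' →
          M Fp = φ Tl.verts (forestBlocks G Fp) * EffB G p Tk Tk' /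
            (tau G (ind G Tl.verts) : ℝ))
    (g : Set G.Subgraph → ℝ)
    (hg : ∀ Tk ∈ Fr.trees, ∀ Tk' ∈ Fr.trees, Tk ≠ Tk' →
      (crossEdges G Tk.verts Tk'.verts).Nonempty →
      g {Tk, Tk'} =
        (∏ᶠ B ∈ forestBlocks G Fr \ {Tk.verts, Tk'.verts}, (tau G (ind G B) : ℝ))⁻¹ *
          (W ((forestBlocks G Fr \ {Tk.verts, Tk'.verts}) ∪ {Tk.verts ∪ Tk'.verts}) /
            W (forestBlocks G Fr)) *
          ((tau G (ind G (Tk.verts ∪ Tk'.verts)) : ℝ) ^ (ρ - 1) /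
            ((tau G (ind G Tk.verts) : ℝ) ^ ρ * (tau G (ind G Tk'.verts) : ℝ) ^ ρ)) *
          φ (Tk.verts ∪ Tk'.verts)
            ((forestBlocks G Fr \ {Tk.verts, Tk'.verts}) ∪ {Tk.verts ∪ Tk'.verts}) *
          EffB G p Tk Tk') :
    ∑ᶠ Fp ∈ {Fp : ForestPlan G (r - 1) | ForestAncestor G Fp Fr}, γt Fp * M Fp =
      γ (forestBlocks G Fr) *
        ∑ᶠ P ∈ {P : Set G.Subgraph | ∃ Tk ∈ Fr.trees, ∃ Tk' ∈ Fr.trees,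
            Tk ≠ Tk' ∧ (crossEdges G Tk.verts Tk'.verts).Nonempty ∧ P = {Tk, Tk'}}, g P := by
  classical
  set PairsS := {P : Set G.Subgraph | ∃ Tk ∈ Fr.trees, ∃ Tk' ∈ Fr.trees,
      Tk ≠ Tk' ∧ (crossEdges G Tk.verts Tk'.verts).Nonempty ∧ P = {Tk, Tk'}} with hPairsS
  set fib : Set G.Subgraph → Set (ForestPlan G (r - 1)) := fun P =>
    {Fp | ForestAncestor G Fp Fr ∧ Fr.trees \ Fp.trees = P} with hfibdef
  have hdisj : PairsS.PairwiseDisjoint fib := by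
    intro P hP Q hQ hPQ
    rw [Function.onFun, Set.disjoint_left]
    rintro Fp ⟨-, h1⟩ ⟨-, h2⟩
    exact hPQ (h1.symm.trans h2)
  have hcover : {Fp : ForestPlan G (r - 1) | ForestAncestor G Fp Fr} =
      ⋃ P ∈ PairsS, fib P := by
    ext Fp
    simp only [Set.mem_setOf_eq, Set.mem_iUnion]
    constructor
    · intro hanc
      obtain ⟨Tk, Tk', Tl, hk, hk', hne, hpair, hTl, htrees, hverts⟩ :=
        anc_struct hr Fr Fp hanc
      have hTlmem : Tl ∈ Fp.trees := by
        have : Tl ∈ Fp.trees \ Fr.trees := by rw [hTl]; rfl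
        exact this.1
      have hcr : (crossEdges G Tk.verts Tk'.verts).Nonempty :=
        crossEdges_nonempty_of_spanning (Fp.isTree Tl hTlmem).isConnected hverts
          (verts_nonempty Fr hk) (verts_nonempty Fr hk')
          (Fr.trees_disjoint Tk hk Tk' hk' hne)
      exact ⟨{Tk, Tk'}, ⟨Tk, hk, Tk', hk', hne, hcr, rfl⟩, hanc, hpair⟩
    · rintro ⟨P, hP, hFp⟩
      exact hFp.1
  have hper : ∀ P ∈ PairsS, (∑ᶠ Fp ∈ fib P, γt Fp * M Fp) = γ (forestBlocks G Fr) * g P := by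
    rintro P ⟨Tk, hk, Tk', hk', hne, hcr, rfl⟩
    exact pair_sum G r hr Fr W hWr ρ p φ γ hγ γt hγt M hM g hg Tk Tk' hk hk' hne hcr
  rw [hcover, finsum_mem_biUnion hdisj (Set.toFinite _) (fun P _ => Set.toFinite _),
    finsum_mem_congr rfl hper]
  have hfin : PairsS.Finite := Set.toFinite _
  rw [← hfin.coe_toFinset]
  simp only [finsum_mem_coe_finset]
  rw [← Finset.mul_sum]

end Redist
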